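/- Exterior angle theorem (Euclid I.16): in the Euclidean plane, let a, b, c, d be points with c strictly between b and d (Sbtw ℝ b c d) and with a not on the line through b and c (a is not in the affine span of {b, c}). Then the interior angle at a is strictly less than the exterior angle at c: ∠ b a c < ∠ a c d. -/

import Mathlib

open scoped EuclideanGeometry

/-- Exterior angle theorem (Euclid I.16). -/
theorem exterior_angle (a b c d : EuclideanSpace ℝ (Fin 2))
    (hbcd : Sbtw ℝ b c d)
    (ha : a ∉ affineSpan ℝ ({b, c} : Set (EuclideanSpace ℝ (Fin 2)))) :
    ∠ b a c < ∠ a c d := by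
  have hba : b ≠ a := fun h => ha (h ▸ mem_affineSpan ℝ (by simp))
  have hca : c ≠ a := fun h => ha (h ▸ mem_affineSpan ℝ (by simp))
  have hnc : ¬Collinear ℝ ({a, b, c} : Set (EuclideanSpace ℝ (Fin 2))) := by
    intro h
    apply ha
    have hbc : b ≠ c := hbcd.ne_left.symm
    exact h.mem_affineSpan_of_mem_of_ne (p₁ := b) (p₂ := c) (p₃ := a) (by simp) (by simp) (by simp) hbc
  have hsum := EuclideanGeometry.angle_add_angle_add_angle_eq_pi c hba
  have hpi : ∠ b c d = Real.pi := EuclideanGeometry.angle_eq_pi_iff_sbtw.2 hbcd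
  have hsplit := EuclideanGeometry.angle_add_angle_eq_pi_of_angle_eq_pi a hpi
  have hpos : 0 < ∠ a b c := EuclideanGeometry.angle_pos_of_not_collinear hnc
  have h1 : ∠ b a c = ∠ c a b := EuclideanGeometry.angle_comm _ _ _
  have h2 : ∠ b c a = ∠ a c b := EuclideanGeometry.angle_comm _ _ _
  linarith
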